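/- For a concave (submodular) continuous capacity ν on a measurable space X, the Choquet integral is sublinear: for all measurable f, g : X → [0,∞] and α, β ≥ 0, ∮(αf + βg) dν ≤ α∮f dν + β∮g dν. -/

import Mathlib

open MeasureTheory
open scoped ENNReal NNReal

/-- The Choquet integral of `f : X → [0,∞]` against a set function `ν`:
`∮ f dν = ∫₀^∞ ν({x | f(x) > t}) dt`. -/
noncomputable def choquet {X : Type*} [MeasurableSpace X]
    (ν : Set X → ℝ≥0∞) (f : X → ℝ≥0∞) : ℝ≥0∞ :=
  ∫⁻ t in Set.Ioi (0 : ℝ), ν {x | ENNReal.ofReal t < f x}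

/-- `ν` is an (ω-)capacity on the Borel sets of `X`: it vanishes on `∅`, takes finite
values, is monotone, and is continuous along increasing sequences of measurable sets. -/
def IsCapacity {X : Type*} [MeasurableSpace X] (ν : Set X → ℝ≥0∞) : Prop :=
  ν ∅ = 0 ∧
  (∀ s : Set X, MeasurableSet s → ν s ≠ ∞) ∧
  (∀ s t : Set X, MeasurableSet s → MeasurableSet t → s ⊆ t → ν s ≤ ν t) ∧
  (∀ U : ℕ → Set X, (∀ n, MeasurableSet (U n)) → Monotone U →
    ν (⋃ n, U n) = ⨆ n, ν (U n))

open Set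

lemma lintegral_Ioi_shift (F : ℝ → ℝ≥0∞) (hF : Measurable F) (c : ℝ) :
    ∫⁻ t in Set.Ioi c, F (t - c) = ∫⁻ t in Set.Ioi (0 : ℝ), F t := by
  have hmap : Measure.map (fun x : ℝ => x + c) volume = volume :=
    map_add_right_eq_self volume c
  have h := setLIntegral_map (μ := volume) (s := Set.Ioi c) measurableSet_Ioi
    (f := fun t => F (t - c)) (g := fun x : ℝ => x + c)
    (hF.comp (measurable_sub_const c)) (measurable_add_const c)
  rw [hmap] at h
  rw [h]
  have hpre : (fun x : ℝ => x + c) ⁻¹' Set.Ioi c = Set.Ioi 0 := by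
    ext x; simp [lt_add_iff_pos_left]
  rw [hpre]
  simp

lemma lintegral_Ioi_scale (F : ℝ → ℝ≥0∞) (hF : Measurable F) {a : ℝ} (ha : 0 < a) :
    ∫⁻ t in Set.Ioi (0 : ℝ), F (t / a) = ENNReal.ofReal a * ∫⁻ t in Set.Ioi (0 : ℝ), F t := by
  have hmap : Measure.map (fun x : ℝ => a * x) volume
      = ENNReal.ofReal |a⁻¹| • volume := Real.map_volume_mul_left (ne_of_gt ha)
  have h := setLIntegral_map (μ := volume) (s := Set.Ioi (0 : ℝ)) measurableSet_Ioi
    (f := fun t => F (t / a)) (g := fun x : ℝ => a * x)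
    (hF.comp (measurable_id.div_const a)) (measurable_const_mul a)
  rw [hmap] at h
  have hpre : (fun x : ℝ => a * x) ⁻¹' Set.Ioi 0 = Set.Ioi 0 := by
    ext x; simp [mul_pos_iff_of_pos_left, ha]
  rw [hpre] at h
  have h2 : ∀ x : ℝ, F (a * x / a) = F x := fun x => by rw [mul_div_cancel_left₀ _ (ne_of_gt ha)]
  simp only [h2] at h
  rw [Measure.restrict_smul, lintegral_smul_measure] at h
  rw [abs_of_pos (inv_pos.mpr ha)] at h
  -- h : ofReal a⁻¹ * ∫⁻ t in Ioi 0, F (t / a) = ∫⁻ x in Ioi 0, F x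
  calc ∫⁻ t in Set.Ioi (0:ℝ), F (t / a)
      = (ENNReal.ofReal a * ENNReal.ofReal a⁻¹) * ∫⁻ t in Set.Ioi (0:ℝ), F (t / a) := by
        rw [← ENNReal.ofReal_mul ha.le, mul_inv_cancel₀ (ne_of_gt ha)]; simp
    _ = ENNReal.ofReal a * (ENNReal.ofReal a⁻¹ * ∫⁻ t in Set.Ioi (0:ℝ), F (t / a)) := by ring
    _ = ENNReal.ofReal a * ∫⁻ t in Set.Ioi (0:ℝ), F t := by rw [← h, smul_eq_mul]

lemma lintegral_Ioi_layer (F G : ℝ → ℝ≥0∞) (hG : Measurable G) (a : ℝ≥0∞) {m : ℝ}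
    (hm : 0 < m)
    (hlow : ∀ t : ℝ, 0 < t → t < m → F t = a)
    (hhigh : ∀ t : ℝ, m ≤ t → F t = G (t - m)) :
    ∫⁻ t in Set.Ioi (0 : ℝ), F t = ENNReal.ofReal m * a + ∫⁻ t in Set.Ioi (0 : ℝ), G t := by
  have hsplit : Set.Ioi (0:ℝ) = Set.Ioo 0 m ∪ Set.Ici m := by
    ext t
    simp only [Set.mem_Ioi, Set.mem_union, Set.mem_Ioo, Set.mem_Ici]
    constructor
    · intro ht; rcases lt_or_ge t m with h | h
      · exact Or.inl ⟨ht, h⟩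
      · exact Or.inr h
    · rintro (⟨h, _⟩ | h); · exact h
      · exact lt_of_lt_of_le hm h
  have hsum : ∫⁻ t in Set.Ioi (0:ℝ), F t
      = (∫⁻ t in Set.Ioo 0 m, F t) + ∫⁻ t in Set.Ici m, F t := by
    have hdisj : Disjoint (Set.Ioo (0:ℝ) m) (Set.Ici m) := by
      rw [Set.disjoint_left]
      rintro t ⟨_, h2⟩ h3
      exact absurd h3 (not_le.mpr h2)
    rw [hsplit]
    exact lintegral_union (μ := volume) (f := F) measurableSet_Ici hdisj
  rw [hsum]
  congr 1
  · rw [setLIntegral_congr_fun measurableSet_Ioo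
      (fun t ht => hlow t ht.1 ht.2 : Set.EqOn F (fun _ => a) (Set.Ioo 0 m))]
    rw [setLIntegral_const, Real.volume_Ioo, sub_zero, mul_comm]
  · rw [setLIntegral_congr_fun measurableSet_Ici
      (fun t ht => hhigh t ht :
        Set.EqOn F (fun t => G (t - m)) (Set.Ici m))]
    rw [← setLIntegral_congr Ioi_ae_eq_Ici]
    exact lintegral_Ioi_shift G hG m

section ChoquetAux
variable {X : Type*} [MeasurableSpace X] {ν : Set X → ℝ≥0∞}

lemma level_measurable {f : X → ℝ≥0∞} (hf : Measurable f) (t : ℝ) :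
    MeasurableSet {x | ENNReal.ofReal t < f x} :=
  measurableSet_lt measurable_const hf

lemma level_antitone {f : X → ℝ≥0∞} (hν : IsCapacity ν) (hf : Measurable f) :
    Antitone (fun t : ℝ => ν {x | ENNReal.ofReal t < f x}) := by
  intro s t hst
  exact hν.2.2.1 _ _ (level_measurable hf t) (level_measurable hf s)
    (fun x hx => lt_of_le_of_lt (ENNReal.ofReal_le_ofReal hst) hx)

lemma choquet_mono (hν : IsCapacity ν) {f g : X → ℝ≥0∞} (hf : Measurable f)
    (hg : Measurable g) (h : ∀ x, f x ≤ g x) : choquet ν f ≤ choquet ν g := by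
  refine lintegral_mono fun t => ?_
  exact hν.2.2.1 _ _ (level_measurable hf t) (level_measurable hg t)
    (fun x hx => lt_of_lt_of_le hx (h x))

lemma choquet_iSup (hν : IsCapacity ν) (h : ℕ → X → ℝ≥0∞)
    (hm : ∀ n, Measurable (h n)) (hmono : Monotone h) :
    choquet ν (fun x => ⨆ n, h n x) = ⨆ n, choquet ν (h n) := by
  unfold choquet
  have key : ∀ t : ℝ, ν {x | ENNReal.ofReal t < ⨆ n, h n x}
      = ⨆ n, ν {x | ENNReal.ofReal t < h n x} := by
    intro t
    have : {x | ENNReal.ofReal t < ⨆ n, h n x} = ⋃ n, {x | ENNReal.ofReal t < h n x} := by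
      ext x; simp [lt_iSup_iff]
    rw [this]
    exact hν.2.2.2 _ (fun n => level_measurable (hm n) t)
      (fun a b hab x hx => lt_of_lt_of_le hx (hmono hab x))
  simp only [key]
  exact lintegral_iSup (fun n => (level_antitone hν (hm n)).measurable)
    (fun a b hab t => hν.2.2.1 _ _ (level_measurable (hm a) t) (level_measurable (hm b) t)
      (fun x hx => lt_of_lt_of_le hx (hmono hab x)))


lemma choquet_add_indicator (hν : IsCapacity ν)
    (hsub : ∀ s t : Set X, MeasurableSet s → MeasurableSet t →
      ν (s ∪ t) + ν (s ∩ t) ≤ ν s + ν t)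
    {f : X → ℝ≥0∞} (hf : Measurable f) {A : Set X} (hA : MeasurableSet A) (c : ℝ≥0) :
    choquet ν (fun x => f x + A.indicator (fun _ => (c : ℝ≥0∞)) x)
      ≤ choquet ν f + c * ν A := by
  rcases eq_or_ne c 0 with rfl | hc0
  · simp [choquet]
  by_cases hfin : choquet ν f = ∞
  · rw [hfin]; simp
  set c' : ℝ := (c : ℝ) with hc'
  have hc'pos : 0 < c' := by exact_mod_cast hc0.bot_lt
  have hcoe : ENNReal.ofReal c' = (c : ℝ≥0∞) := ENNReal.ofReal_coe_nnreal
  set h : X → ℝ≥0∞ := fun x => f x + A.indicator (fun _ => (c : ℝ≥0∞)) x with hh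
  have hhm : Measurable h := hf.add (measurable_const.indicator hA)
  have hfcm : Measurable (fun x => f x + (c : ℝ≥0∞)) := hf.add_const _
  -- the four level-set families
  have measF : ∀ t : ℝ, MeasurableSet {x | ENNReal.ofReal t < f x} :=
    level_measurable hf
  have measS : ∀ t : ℝ, MeasurableSet {x | ENNReal.ofReal t < h x} :=
    level_measurable hhm
  have measB : ∀ t : ℝ, MeasurableSet (A ∩ {x | ENNReal.ofReal t < f x + c}) :=
    fun t => hA.inter (level_measurable hfcm t)
  have measAF : ∀ t : ℝ, MeasurableSet (A ∩ {x | ENNReal.ofReal t < f x}) :=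
    fun t => hA.inter (measF t)
  have hνmono := hν.2.2.1
  -- key pointwise inequality from submodularity
  have key : ∀ t : ℝ,
      ν {x | ENNReal.ofReal t < h x} + ν (A ∩ {x | ENNReal.ofReal t < f x})
        ≤ ν {x | ENNReal.ofReal t < f x} + ν (A ∩ {x | ENNReal.ofReal t < f x + c}) := by
    intro t
    have hsubset1 : {x | ENNReal.ofReal t < h x}
        ⊆ {x | ENNReal.ofReal t < f x} ∪ A ∩ {x | ENNReal.ofReal t < f x + c} := by
      intro x hx
      by_cases hxA : x ∈ A
      · right
        refine ⟨hxA, ?_⟩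
        have : h x = f x + c := by simp [hh, Set.indicator_of_mem hxA]
        simpa [this] using hx
      · left
        have : h x = f x := by simp [hh, Set.indicator_of_notMem hxA]
        simpa [this] using hx
    have hsubset2 : A ∩ {x | ENNReal.ofReal t < f x}
        ⊆ {x | ENNReal.ofReal t < f x} ∩ (A ∩ {x | ENNReal.ofReal t < f x + c}) := by
      rintro x ⟨hxA, hxF⟩
      exact ⟨hxF, hxA, show ENNReal.ofReal t < f x + c from lt_of_lt_of_le hxF le_self_add⟩
    calc ν {x | ENNReal.ofReal t < h x} + ν (A ∩ {x | ENNReal.ofReal t < f x})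
        ≤ ν ({x | ENNReal.ofReal t < f x} ∪ A ∩ {x | ENNReal.ofReal t < f x + c})
          + ν ({x | ENNReal.ofReal t < f x} ∩ (A ∩ {x | ENNReal.ofReal t < f x + c})) :=
          add_le_add (hνmono _ _ (measS t) ((measF t).union (measB t)) hsubset1)
            (hνmono _ _ (measAF t) ((measF t).inter (measB t)) hsubset2)
      _ ≤ ν {x | ENNReal.ofReal t < f x} + ν (A ∩ {x | ENNReal.ofReal t < f x + c}) :=
          hsub _ _ (measF t) (measB t)
  -- antitone hence measurable auxiliary functions
  have antAF : Antitone (fun t : ℝ => ν (A ∩ {x | ENNReal.ofReal t < f x})) := by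
    intro s t hst
    exact hνmono _ _ (measAF t) (measAF s) (inter_subset_inter_right A
      (fun x hx => lt_of_le_of_lt (ENNReal.ofReal_le_ofReal hst) hx))
  have antB : Antitone (fun t : ℝ => ν (A ∩ {x | ENNReal.ofReal t < f x + c})) := by
    intro s t hst
    exact hνmono _ _ (measB t) (measB s) (inter_subset_inter_right A
      (fun x hx => lt_of_le_of_lt (ENNReal.ofReal_le_ofReal hst) hx))
  set I : ℝ≥0∞ := ∫⁻ t in Set.Ioi (0:ℝ), ν (A ∩ {x | ENNReal.ofReal t < f x}) with hI
  have hIle : I ≤ choquet ν f := by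
    refine lintegral_mono fun t => ?_
    exact hνmono _ _ (measAF t) (measF t) inter_subset_right
  have hIfin : I ≠ ∞ := fun hEq => hfin (top_le_iff.mp (hEq ▸ hIle))
  -- integrate the key inequality
  have h1 : (∫⁻ t in Set.Ioi (0:ℝ), ν {x | ENNReal.ofReal t < h x}) + I
      ≤ choquet ν f + ∫⁻ t in Set.Ioi (0:ℝ),
        ν (A ∩ {x | ENNReal.ofReal t < f x + c}) := by
    rw [hI]
    unfold choquet
    rw [← lintegral_add_right _ antAF.measurable, ← lintegral_add_right _ antB.measurable]
    exact lintegral_mono fun t => key t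
  -- evaluate the shifted integral
  have h2 : (∫⁻ t in Set.Ioi (0:ℝ), ν (A ∩ {x | ENNReal.ofReal t < f x + c}))
      = ENNReal.ofReal c' * ν A + I := by
    rw [hI]
    refine lintegral_Ioi_layer _ _ antAF.measurable (ν A) hc'pos ?_ ?_
    · intro t ht htc
      have : A ∩ {x | ENNReal.ofReal t < f x + c} = A := by
        refine Set.inter_eq_left.mpr fun x hx => ?_
        have h1 : ENNReal.ofReal t < ENNReal.ofReal c' :=
          (ENNReal.ofReal_lt_ofReal_iff hc'pos).mpr htc
        rw [hcoe] at h1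
        exact lt_of_lt_of_le h1 le_add_self
      rw [this]
    · intro t ht
      have hset : A ∩ {x | ENNReal.ofReal t < f x + c}
          = A ∩ {x | ENNReal.ofReal (t - c') < f x} := by
        have hofReal : ENNReal.ofReal t = ENNReal.ofReal (t - c') + (c : ℝ≥0∞) := by
          rw [← hcoe, ← ENNReal.ofReal_add (by linarith) hc'pos.le, sub_add_cancel]
        ext x
        simp only [Set.mem_inter_iff, Set.mem_setOf_eq, hofReal]
        rw [ENNReal.add_lt_add_iff_right ENNReal.coe_ne_top]
      rw [hset]
  rw [hcoe] at h2
  rw [h2] at h1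
  have h3 : (∫⁻ t in Set.Ioi (0:ℝ), ν {x | ENNReal.ofReal t < h x}) + I
      ≤ (choquet ν f + (c : ℝ≥0∞) * ν A) + I := by
    calc (∫⁻ t in Set.Ioi (0:ℝ), ν {x | ENNReal.ofReal t < h x}) + I
        ≤ choquet ν f + ((c : ℝ≥0∞) * ν A + I) := h1
      _ = (choquet ν f + (c : ℝ≥0∞) * ν A) + I := by ring
  exact (ENNReal.add_le_add_iff_right hIfin).mp h3


lemma choquet_add_simple (hν : IsCapacity ν)
    (hsub : ∀ s t : Set X, MeasurableSet s → MeasurableSet t →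
      ν (s ∪ t) + ν (s ∩ t) ≤ ν s + ν t)
    {f : X → ℝ≥0∞} (hf : Measurable f) :
    ∀ (n : ℕ) (s : SimpleFunc X ℝ≥0∞),
      (s.range.filter (fun v => v ≠ 0)).card ≤ n → (∀ x, s x ≠ ∞) →
      choquet ν (fun x => f x + s x) ≤ choquet ν f + choquet ν ⇑s := by
  intro n
  induction n with
  | zero =>
    intro s hcard _
    have hz : ∀ x, s x = 0 := by
      intro x
      by_contra hne
      have hmem : s x ∈ s.range.filter (fun v => v ≠ 0) :=
        Finset.mem_filter.mpr ⟨s.mem_range_self x, hne⟩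
      have := Finset.card_pos.mpr ⟨_, hmem⟩
      omega
    have : (fun x => f x + s x) = f := funext fun x => by rw [hz x, add_zero]
    rw [this]
    exact le_self_add
  | succ n IH =>
    intro s hcard hfin
    by_cases hle : (s.range.filter (fun v => v ≠ 0)).card ≤ n
    · exact IH s hle hfin
    set P := s.range.filter (fun v => v ≠ 0) with hP
    have hPcard : P.card = n + 1 := le_antisymm hcard (by omega)
    have hPne : P.Nonempty := Finset.card_pos.mp (by omega)
    set m := P.min' hPne with hm
    have hmP : m ∈ P := P.min'_mem hPne
    have hm0 : m ≠ 0 := by simpa using (Finset.mem_filter.mp hmP).2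
    have hmrange : m ∈ s.range := (Finset.mem_filter.mp hmP).1
    have hmtop : m ≠ ∞ := by
      obtain ⟨x, hx⟩ := SimpleFunc.mem_range.mp hmrange
      exact hx ▸ hfin x
    have hmle : ∀ x, s x ≠ 0 → m ≤ s x := fun x hx =>
      P.min'_le _ (Finset.mem_filter.mpr ⟨s.mem_range_self x, by simpa using hx⟩)
    set A := {x | s x ≠ 0} with hAdef
    have hA : MeasurableSet A := by
      have : A = ⇑s ⁻¹' ({0}ᶜ) := rfl
      rw [this]
      exact s.measurable (measurableSet_singleton 0).compl
    set s' := s.map (fun v => v - m) with hs'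
    have hs'app : ∀ x, s' x = s x - m := fun x => rfl
    have hfin' : ∀ x, s' x ≠ ∞ := fun x => by
      rw [hs'app]
      exact fun hEq => hfin x (top_le_iff.mp (hEq ▸ tsub_le_self))
    set mc : ℝ≥0 := m.toNNReal with hmcdef
    have hmc : (mc : ℝ≥0∞) = m := ENNReal.coe_toNNReal hmtop
    have hmcpos : (0 : ℝ) < (mc : ℝ) := by
      have : mc ≠ 0 := fun hEq => hm0 (by rw [← hmc, hEq]; simp)
      exact_mod_cast this.bot_lt
    have hofReal : ENNReal.ofReal (mc : ℝ) = m := by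
      rw [ENNReal.ofReal_coe_nnreal, hmc]
    have hdecomp : ∀ x, s x = s' x + A.indicator (fun _ => (mc : ℝ≥0∞)) x := by
      intro x
      by_cases hx : x ∈ A
      · rw [Set.indicator_of_mem hx, hs'app, hmc, tsub_add_cancel_of_le (hmle x hx)]
      · have hx0 : s x = 0 := not_not.mp hx
        have h0 : s' x = 0 := by rw [hs'app, hx0, zero_tsub]
        rw [Set.indicator_of_notMem hx, h0, hx0, add_zero]
    -- cardinality decreases
    have hcard' : (s'.range.filter (fun v => v ≠ 0)).card ≤ n := by
      classical
      have hmaps : ∀ v ∈ s'.range.filter (fun v => v ≠ 0), v + m ∈ P.erase m := by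
        intro v hv
        obtain ⟨hvr, hv0⟩ := Finset.mem_filter.mp hv
        obtain ⟨x, hx⟩ := SimpleFunc.mem_range.mp hvr
        have hx' : v = s x - m := by rw [← hx, hs'app]
        have hv0' : v ≠ 0 := by simpa using hv0
        have hsx0 : s x ≠ 0 := by
          intro hEq
          apply hv0'
          rw [hx', hEq]
          exact zero_tsub m
        have hvm : v + m = s x := by
          rw [hx', tsub_add_cancel_of_le (hmle x hsx0)]
        refine Finset.mem_erase.mpr ⟨?_, Finset.mem_filter.mpr ⟨?_, ?_⟩⟩
        · intro hEq
          apply hv0'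
          have := congrArg (· - m) hEq
          simpa [ENNReal.add_sub_cancel_right hmtop] using this
        · exact hvm ▸ s.mem_range_self x
        · simp only [hvm]
          simpa using hsx0
      have hinj : Set.InjOn (fun v => v + m) (s'.range.filter (fun v => v ≠ 0)) := by
        intro a _ b _ hab
        have := congrArg (· - m) hab
        simpa [ENNReal.add_sub_cancel_right hmtop] using this
      have := Finset.card_le_card_of_injOn _ hmaps hinj
      rw [Finset.card_erase_of_mem hmP, hPcard] at this
      simpa using this
    -- the layer identity for the Choquet integral of s
    have hlayer : choquet ν ⇑s = m * ν A + choquet ν ⇑s' := by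
      rw [← hofReal]
      refine lintegral_Ioi_layer _ _ (level_antitone hν s'.measurable).measurable (ν A)
        hmcpos ?_ ?_
      · intro t ht htm
        have htm' : ENNReal.ofReal t < m := by
          rw [← hofReal]
          exact (ENNReal.ofReal_lt_ofReal_iff hmcpos).mpr htm
        have hseteq : {x | ENNReal.ofReal t < s x} = A := by
          ext x
          simp only [Set.mem_setOf_eq, hAdef]
          constructor
          · intro hlt hEq
            rw [hEq] at hlt
            exact absurd hlt (by simp)
          · intro hxA
            exact lt_of_lt_of_le htm' (hmle x hxA)
        rw [hseteq]
      · intro t ht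
        have hsplit : ENNReal.ofReal t = ENNReal.ofReal (t - (mc : ℝ)) + m := by
          rw [← hofReal, ← ENNReal.ofReal_add (by linarith) hmcpos.le, sub_add_cancel]
        have hseteq : {x | ENNReal.ofReal t < s x}
            = {x | ENNReal.ofReal (t - (mc : ℝ)) < s' x} := by
          ext x
          simp only [Set.mem_setOf_eq, hs'app]
          rw [(ENNReal.cancel_of_ne hmtop).lt_tsub_iff_right, ← hsplit]
        rw [hseteq]
    -- chain of inequalities
    have heq : (fun x => f x + s x)
        = (fun x => (f x + s' x) + A.indicator (fun _ => (mc : ℝ≥0∞)) x) :=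
      funext fun x => by rw [hdecomp x, add_assoc]
    calc choquet ν (fun x => f x + s x)
        = choquet ν (fun x => (f x + s' x) + A.indicator (fun _ => (mc : ℝ≥0∞)) x) := by
          rw [heq]
      _ ≤ choquet ν (fun x => f x + s' x) + mc * ν A :=
          choquet_add_indicator hν hsub (hf.add s'.measurable) hA mc
      _ ≤ (choquet ν f + choquet ν ⇑s') + mc * ν A :=
          add_le_add (IH s' hcard' hfin') le_rfl
      _ = choquet ν f + (m * ν A + choquet ν ⇑s') := by rw [hmc]; ring
      _ = choquet ν f + choquet ν ⇑s := by rw [hlayer]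

lemma choquet_add_le (hν : IsCapacity ν)
    (hsub : ∀ s t : Set X, MeasurableSet s → MeasurableSet t →
      ν (s ∪ t) + ν (s ∩ t) ≤ ν s + ν t)
    {f g : X → ℝ≥0∞} (hf : Measurable f) (hg : Measurable g) :
    choquet ν (fun x => f x + g x) ≤ choquet ν f + choquet ν g := by
  have heq : (fun x => f x + g x)
      = fun x => ⨆ n, (f x + SimpleFunc.eapprox g n x) := by
    funext x
    rw [← SimpleFunc.iSup_eapprox_apply hg x, ENNReal.add_iSup]
  rw [heq, choquet_iSup hν (fun n x => f x + SimpleFunc.eapprox g n x)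
    (fun n => hf.add (SimpleFunc.eapprox g n).measurable)
    (fun a b hab x => add_le_add le_rfl (SimpleFunc.monotone_eapprox g hab x))]
  refine iSup_le fun n => ?_
  calc choquet ν (fun x => f x + SimpleFunc.eapprox g n x)
      ≤ choquet ν f + choquet ν ⇑(SimpleFunc.eapprox g n) :=
        choquet_add_simple hν hsub hf _ (SimpleFunc.eapprox g n) le_rfl
          (fun x => (SimpleFunc.eapprox_lt_top g n x).ne)
    _ ≤ choquet ν f + choquet ν g := by
        refine add_le_add le_rfl (choquet_mono hν (SimpleFunc.eapprox g n).measurable hg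
          (fun x => ?_))
        rw [← SimpleFunc.iSup_eapprox_apply hg x]
        exact le_iSup (fun k => SimpleFunc.eapprox g k x) n

lemma choquet_smul (hν : IsCapacity ν) {f : X → ℝ≥0∞} (hf : Measurable f) (a : ℝ≥0) :
    choquet ν (fun x => (a : ℝ≥0∞) * f x) = (a : ℝ≥0∞) * choquet ν f := by
  rcases eq_or_ne a 0 with rfl | ha
  · simp [choquet, hν.1]
  have hapos : (0 : ℝ) < (a : ℝ) := by exact_mod_cast ha.bot_lt
  have hseteq : ∀ t : ℝ, {x | ENNReal.ofReal t < (a : ℝ≥0∞) * f x}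
      = {x | ENNReal.ofReal (t / (a : ℝ)) < f x} := by
    intro t
    ext x
    simp only [Set.mem_setOf_eq]
    rw [ENNReal.ofReal_div_of_pos hapos, ENNReal.ofReal_coe_nnreal,
      ENNReal.div_lt_iff (Or.inl (by exact_mod_cast ha)) (Or.inl ENNReal.coe_ne_top),
      mul_comm]
  calc choquet ν (fun x => (a : ℝ≥0∞) * f x)
      = ∫⁻ t in Set.Ioi (0:ℝ), ν {x | ENNReal.ofReal (t / (a:ℝ)) < f x} := by
        unfold choquet
        exact lintegral_congr fun t => by rw [hseteq]
    _ = ENNReal.ofReal (a:ℝ) * choquet ν f :=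
        lintegral_Ioi_scale _ (level_antitone hν hf).measurable hapos
    _ = (a : ℝ≥0∞) * choquet ν f := by rw [ENNReal.ofReal_coe_nnreal]


end ChoquetAux

/-- For a concave (submodular) continuous capacity, the Choquet integral is sublinear:
`∮ (αf + βg) dν ≤ α ∮f dν + β ∮g dν` for all measurable `f, g : X → [0,∞]` and all
scalars `α, β ≥ 0`. -/
theorem choquet_sublinear_of_submodular {X : Type*} [MeasurableSpace X]
    (ν : Set X → ℝ≥0∞) (hν : IsCapacity ν)
    (hsub : ∀ s t : Set X, MeasurableSet s → MeasurableSet t →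
      ν (s ∪ t) + ν (s ∩ t) ≤ ν s + ν t)
    (f g : X → ℝ≥0∞) (hf : Measurable f) (hg : Measurable g) (α β : ℝ≥0) :
    choquet ν (fun x => α * f x + β * g x) ≤
      α * choquet ν f + β * choquet ν g := by
  calc choquet ν (fun x => α * f x + β * g x)
      ≤ choquet ν (fun x => (α : ℝ≥0∞) * f x) + choquet ν (fun x => (β : ℝ≥0∞) * g x) :=
        choquet_add_le hν hsub (hf.const_mul _) (hg.const_mul _)
    _ = α * choquet ν f + β * choquet ν g := by
        rw [choquet_smul hν hf α, choquet_smul hν hg β]
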